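/- arXiv:1208.4447 — 3 statements merged into one kernel-verified Lean document; each statement's English description precedes it below -/
import Mathlib

section
/- Let R be a commutative Noetherian ring and Z a subset of Spec R stable under specialization (i.e., if p ∈ Z and p ⊆ q for primes p, q, then q ∈ Z). For a prime ideal p, the injective envelope E(R/p) of R/p satisfies: Γ_Z(E(R/p)) = E(R/p) if p ∈ Z, and Γ_Z(E(R/p)) = 0 if p ∉ Z, where Γ_Z(M) = {x ∈ M | Supp(Rx) ⊆ Z}. -/
open CategoryTheory CategoryTheory.Limits DirectSum TensorProduct

universe u

/-- A subset of `Spec R` is stable under specialization. -/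
def StableZ (R : Type u) [CommRing R] (Z : Set (PrimeSpectrum R)) : Prop :=
  ∀ p q : PrimeSpectrum R, p ∈ Z → p.asIdeal ≤ q.asIdeal → q ∈ Z

lemma mem_support_span_singleton_iff (R : Type u) [CommRing R] {M : Type u} [AddCommGroup M] [Module R M]
    (x : M) (p : PrimeSpectrum R) :
    p ∈ Module.support R (Submodule.span R ({x} : Set M)) ↔
      (Submodule.span R ({x} : Set M)).annihilator ≤ p.asIdeal := by
  have hgen : Submodule.span R ({(⟨x, Submodule.mem_span_singleton_self x⟩ :
      Submodule.span R ({x} : Set M))} : Set (Submodule.span R ({x} : Set M))) = ⊤ := by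
    ext ⟨m, hm⟩
    simp only [Submodule.mem_top, iff_true]
    obtain ⟨r, hr⟩ := Submodule.mem_span_singleton.mp hm
    exact Submodule.mem_span_singleton.mpr ⟨r, by ext; simpa using hr⟩
  rw [Module.mem_support_iff_of_span_eq_top (hs := hgen)]
  constructor
  · rintro ⟨m, hm, hle⟩
    rw [Set.mem_singleton_iff.mp hm] at hle
    intro r hr
    refine hle ?_
    rw [Submodule.mem_annihilator_span_singleton] at hr ⊢
    refine Subtype.ext ?_
    simpa using hr
  · intro h
    refine ⟨_, Set.mem_singleton _, le_trans ?_ h⟩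
    intro r hr
    rw [Submodule.mem_annihilator_span_singleton] at hr
    have hrx : r • x = 0 := by simpa using congrArg Subtype.val hr
    rw [Submodule.mem_annihilator_span_singleton]
    exact hrx

/-- `Γ_Z(M) = {x ∈ M | Supp (Rx) ⊆ Z}`. -/
def gammaZ (R : Type u) [CommRing R] (Z : Set (PrimeSpectrum R)) (M : Type u) [AddCommGroup M] [Module R M] :
    Submodule R M where
  carrier := {x | Module.support R (Submodule.span R ({x} : Set M)) ⊆ Z}
  zero_mem' := by
    intro p hp
    rw [mem_support_span_singleton_iff] at hp
    exact (p.isPrime.ne_top ((Ideal.eq_top_iff_one _).mpr (hp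
      (by rw [Submodule.mem_annihilator_span_singleton]; simp)))).elim
  add_mem' := by
    intro x y hx hy p hp
    rw [mem_support_span_singleton_iff] at hp
    by_cases hxp : (Submodule.span R ({x} : Set M)).annihilator ≤ p.asIdeal
    · exact hx ((mem_support_span_singleton_iff R x p).mpr hxp)
    · refine hy ((mem_support_span_singleton_iff R y p).mpr ?_)
      obtain ⟨a, ha, hap⟩ := SetLike.not_le_iff_exists.mp hxp
      intro b hb
      have hax : a • x = 0 := by
        simpa using (Submodule.mem_annihilator_span_singleton x a).mp ha
      have hby : b • y = 0 := by
        simpa using (Submodule.mem_annihilator_span_singleton y b).mp hb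
      have : a * b ∈ p.asIdeal := by
        refine hp ?_
        rw [Submodule.mem_annihilator_span_singleton]
        rw [smul_add, show (a * b) • x = b • (a • x) by rw [mul_comm, mul_smul], hax,
          smul_zero, zero_add, mul_smul, hby, smul_zero]
      rcases p.isPrime.mem_or_mem this with h | h
      · exact absurd h hap
      · exact h
  smul_mem' := by
    intro c x hx p hp
    rw [mem_support_span_singleton_iff] at hp
    refine hx ((mem_support_span_singleton_iff R x p).mpr (le_trans ?_ hp))
    intro r hr
    rw [Submodule.mem_annihilator_span_singleton] at hr ⊢
    rw [smul_comm, hr, smul_zero]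

/-- `ι : M →ₗ[R] E` exhibits `E` as an injective envelope (injective hull) of `M`:
`E` is injective, `ι` is injective, and the image of `ι` is an essential submodule of `E`. -/
structure IsInjectiveEnvelope (R : Type u) [CommRing R] (M E : Type u) [AddCommGroup M]
    [Module R M] [AddCommGroup E] [Module R E] (ι : M →ₗ[R] E) : Prop where
  injective : Module.Injective R E
  mono : Function.Injective ι
  essential : ∀ N : Submodule R E, N ≠ ⊥ → N ⊓ LinearMap.range ι ≠ ⊥

lemma mem_gammaZ_iff {R : Type u} [CommRing R] {Z : Set (PrimeSpectrum R)} {M : Type u}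
    [AddCommGroup M] [Module R M] (x : M) :
    x ∈ gammaZ R Z M ↔ Module.support R (Submodule.span R ({x} : Set M)) ⊆ Z := Iff.rfl

section Aux

variable {R : Type u} [CommRing R] (p : PrimeSpectrum R)
variable {E : Type u} [AddCommGroup E] [Module R E]
variable (ι : (R ⧸ p.asIdeal) →ₗ[R] E)

lemma exists_pow_smul_eq_zero [IsNoetherianRing R]
    (hE : IsInjectiveEnvelope R (R ⧸ p.asIdeal) E ι)
    {a : R} (ha : a ∈ p.asIdeal) (x : E) : ∃ n : ℕ, a ^ n • x = 0 := by
  by_contra h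
  push_neg at h
  set f : ℕ →o Ideal R :=
    ⟨fun n => (Submodule.span R ({a ^ n • x} : Set E)).annihilator, by
      intro m n hmn r hr
      rw [Submodule.mem_annihilator_span_singleton] at hr ⊢
      obtain ⟨k, rfl⟩ := Nat.exists_eq_add_of_le hmn
      rw [pow_add, mul_comm, mul_smul, smul_comm, hr, smul_zero]⟩ with hf
  obtain ⟨N, hN⟩ := monotone_stabilizes_iff_noetherian.mpr
    (inferInstance : IsNoetherian R R) f
  set y : E := a ^ N • x with hy
  have hy0 : y ≠ 0 := h N
  -- a acts injectively on span {y}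
  have hinj : ∀ s : R, a • (s • y) = 0 → s • y = 0 := by
    intro s hs
    have hs' : s ∈ f (N + 1) := by
      show s ∈ (Submodule.span R ({a ^ (N + 1) • x} : Set E)).annihilator
      rw [Submodule.mem_annihilator_span_singleton]
      have : a • (s • y) = s • (a ^ (N + 1) • x) := by
        rw [hy, pow_succ, mul_comm, mul_smul]
        rw [smul_comm a s]
      rwa [this] at hs
    have hs'' : s ∈ f N := (hN (N + 1) (Nat.le_succ N)) ▸ hs'
    have hs3 : s ∈ (Submodule.span R ({a ^ N • x} : Set E)).annihilator := hs''
    rw [Submodule.mem_annihilator_span_singleton] at hs3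
    exact hs3
  -- essentiality
  have hne : Submodule.span R ({y} : Set E) ≠ ⊥ := by
    intro hbot
    exact hy0 (by simpa [hbot] using Submodule.mem_span_singleton_self (R := R) y)
  obtain ⟨z, hz, hz0⟩ := Submodule.ne_bot_iff _ |>.mp (hE.essential _ hne)
  obtain ⟨hz1, m, hm⟩ := hz
  obtain ⟨s, rfl⟩ := Submodule.mem_span_singleton.mp hz1
  obtain ⟨b, rfl⟩ := Ideal.Quotient.mk_surjective m
  have hbm : a • (Ideal.Quotient.mk p.asIdeal b : R ⧸ p.asIdeal) = 0 := by
    have : (a : R) • (Ideal.Quotient.mk p.asIdeal b) =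
        Ideal.Quotient.mk p.asIdeal (a * b) := rfl
    rw [this, Ideal.Quotient.eq_zero_iff_mem]
    exact Ideal.mul_mem_right _ _ ha
  have : a • (s • y) = 0 := by
    rw [← hm, ← map_smul, hbm, map_zero]
  exact hz0 (hinj s this)

lemma annihilator_le_of_ne_zero (hE : IsInjectiveEnvelope R (R ⧸ p.asIdeal) E ι)
    {x : E} (hx : x ≠ 0) :
    (Submodule.span R ({x} : Set E)).annihilator ≤ p.asIdeal := by
  intro r hr
  rw [Submodule.mem_annihilator_span_singleton] at hr
  by_contra hrp
  have hne : Submodule.span R ({x} : Set E) ≠ ⊥ := by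
    intro hbot
    exact hx (by simpa [hbot] using Submodule.mem_span_singleton_self (R := R) x)
  obtain ⟨z, hz, hz0⟩ := Submodule.ne_bot_iff _ |>.mp (hE.essential _ hne)
  obtain ⟨hz1, m, hm⟩ := hz
  obtain ⟨s, rfl⟩ := Submodule.mem_span_singleton.mp hz1
  have hrz : r • (s • x) = 0 := by
    rw [smul_comm, hr, smul_zero]
  have hm0 : m ≠ 0 := by
    intro h0
    exact hz0 (by rw [← hm, h0, map_zero])
  have hrm : r • m = 0 := by
    apply hE.mono
    rw [map_smul, hm, map_zero]
    exact hrz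
  obtain ⟨b, rfl⟩ := Ideal.Quotient.mk_surjective m
  have : (Ideal.Quotient.mk p.asIdeal (r * b)) = 0 := hrm
  rw [Ideal.Quotient.eq_zero_iff_mem] at this
  rcases p.isPrime.mem_or_mem this with h1 | h2
  · exact hrp h1
  · exact hm0 (Ideal.Quotient.eq_zero_iff_mem.mpr h2)

end Aux

/-- for `Z ⊆ Spec R` stable under specialization and `E = E(R/p)` the injective
envelope of `R/p`, `Γ_Z(E) = E` if `p ∈ Z` and `Γ_Z(E) = 0` if `p ∉ Z`. -/
theorem gammaZ_injectiveEnvelope (R : Type u) [CommRing R] [IsNoetherianRing R]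
    (Z : Set (PrimeSpectrum R)) (hZ : StableZ R Z) (p : PrimeSpectrum R)
    (E : Type u) [AddCommGroup E] [Module R E]
    (ι : (R ⧸ p.asIdeal) →ₗ[R] E) (hE : IsInjectiveEnvelope R (R ⧸ p.asIdeal) E ι) :
    (p ∈ Z → gammaZ R Z E = ⊤) ∧ (p ∉ Z → gammaZ R Z E = ⊥) := by
  constructor
  · intro hp
    rw [eq_top_iff]
    intro x _
    rw [mem_gammaZ_iff]
    intro q hq
    rw [mem_support_span_singleton_iff] at hq
    refine hZ p q hp ?_
    intro a ha
    obtain ⟨n, hn⟩ := exists_pow_smul_eq_zero p ι hE ha x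
    have : a ^ n ∈ q.asIdeal := by
      refine hq ?_
      rw [Submodule.mem_annihilator_span_singleton]
      exact hn
    exact q.isPrime.mem_of_pow_mem n this
  · intro hp
    rw [eq_bot_iff]
    intro x hx
    rw [Submodule.mem_bot]
    by_contra hx0
    rw [mem_gammaZ_iff] at hx
    refine hp (hx ?_)
    rw [mem_support_span_singleton_iff]
    exact annihilator_le_of_ne_zero p ι hE hx0
end

section
/- Let R be a commutative Noetherian ring, Z ⊆ Spec R stable under specialization, and M a finitely generated R-module such that Supp_R(M) ∩ Z consists of finitely many maximal ideals. Then Γ_Z(M) is an Artinian R-module. -/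
open CategoryTheory CategoryTheory.Limits DirectSum TensorProduct

universe u

/-- A Noetherian module killed by a maximal ideal is Artinian. -/
lemma isArtinian_of_isMaximal_le_ann (R : Type u) [CommRing R] (m : Ideal R) (hm : m.IsMaximal)
    (N : Type u) [AddCommGroup N] [Module R N] [IsNoetherian R N]
    (h : m ≤ Module.annihilator R N) : IsArtinian R N := by
  have htor : Module.IsTorsionBySet R N m := fun x a =>
    Module.mem_annihilator.mp (h a.2) x
  letI := htor.module
  haveI := htor.isScalarTower (S := R)
  haveI : m.IsMaximal := hm
  letI : Field (R ⧸ m) := Ideal.Quotient.field m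
  haveI : IsNoetherian (R ⧸ m) N := isNoetherian_of_tower R inferInstance
  haveI hart : IsArtinian (R ⧸ m) N := inferInstance
  -- transfer Artinianness back to `R` along the surjection `R → R ⧸ m`
  let g : Submodule R N → Submodule (R ⧸ m) N := fun p =>
    { carrier := p
      add_mem' := fun ha hb => p.add_mem ha hb
      zero_mem' := p.zero_mem
      smul_mem' := by
        intro c x hx
        obtain ⟨r, rfl⟩ := Ideal.Quotient.mk_surjective c
        exact (htor.mk_smul r x) ▸ p.smul_mem r hx }
  have hg : StrictMono g := by
    intro p q hpq
    have : ((p : Set N)) ⊂ (q : Set N) := SetLike.coe_ssubset_coe.mpr hpq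
    exact SetLike.coe_ssubset_coe.mp this
  exact hg.wellFoundedLT

/-- A Noetherian module killed by a product of maximal ideals is Artinian. -/
lemma isArtinian_of_prod_maximal_le_ann (R : Type u) [CommRing R] :
    ∀ (l : List (Ideal R)), (∀ m ∈ l, m.IsMaximal) →
    ∀ (N : Type u) [AddCommGroup N] [Module R N] [IsNoetherian R N],
      l.prod ≤ Module.annihilator R N → IsArtinian R N := by
  intro l
  induction l with
  | nil =>
    intro _ N _ _ _ h
    have h1 : (1 : R) ∈ Module.annihilator R N := h (by simp)
    have : Subsingleton N := by
      refine ⟨fun a b => ?_⟩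
      have ha := Module.mem_annihilator.mp h1 a
      have hb := Module.mem_annihilator.mp h1 b
      rw [one_smul] at ha hb
      rw [ha, hb]
    exact isArtinian_of_finite
  | cons m l ih =>
    intro hmax N _ _ _ h
    rw [List.prod_cons] at h
    set N' : Submodule R N := l.prod • ⊤ with hN'def
    have hsmul : ∀ a ∈ m, ∀ x ∈ N', a • x = (0 : N) := by
      intro a ha x hx
      refine Submodule.smul_induction_on hx ?_ ?_
      · intro r hr n _
        have hmem : a * r ∈ m * l.prod := Ideal.mul_mem_mul ha hr
        rw [smul_smul]
        exact Module.mem_annihilator.mp (h hmem) n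
      · intro x y hx hy
        rw [smul_add, hx, hy, add_zero]
    have hann' : m ≤ Module.annihilator R N' := by
      intro a ha
      rw [Module.mem_annihilator]
      rintro ⟨x, hx⟩
      exact Subtype.ext (hsmul a ha x hx)
    haveI hA' : IsArtinian R N' :=
      isArtinian_of_isMaximal_le_ann R m (hmax m List.mem_cons_self) N' hann'
    have hannQ : l.prod ≤ Module.annihilator R (N ⧸ N') := by
      intro r hr
      rw [Module.mem_annihilator]
      intro x
      obtain ⟨x, rfl⟩ := Submodule.Quotient.mk_surjective N' x
      rw [← Submodule.Quotient.mk_smul, Submodule.Quotient.mk_eq_zero]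
      exact Submodule.smul_mem_smul hr Submodule.mem_top
    haveI hQ : IsArtinian R (N ⧸ N') :=
      ih (fun m hm => hmax m (List.mem_cons_of_mem _ hm)) _ hannQ
    exact (isArtinian_iff_submodule_quotient N').mpr ⟨hA', hQ⟩

lemma list_prod_le_of_mem {R : Type u} [CommRing R] :
    ∀ (l : List (Ideal R)) (m : Ideal R), m ∈ l → l.prod ≤ m := by
  intro l
  induction l with
  | nil => intro m hm; exact absurd hm List.not_mem_nil
  | cons a l ih =>
    intro m hm
    rw [List.prod_cons]
    rcases List.mem_cons.mp hm with rfl | hm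
    · exact Ideal.mul_le_left
    · exact le_trans Ideal.mul_le_right (ih m hm)

/-- if `M` is a finitely generated module and `Supp M ∩ Z` consists of
finitely many maximal ideals, then `Γ_Z(M)` is Artinian. -/
theorem isArtinian_gammaZ (R : Type u) [CommRing R] [IsNoetherianRing R]
    (Z : Set (PrimeSpectrum R)) (hZ : StableZ R Z)
    (M : Type u) [AddCommGroup M] [Module R M] [Module.Finite R M]
    (hfin : (Module.support R M ∩ Z).Finite)
    (hmax : ∀ p ∈ Module.support R M ∩ Z, p.asIdeal.IsMaximal) :
    IsArtinian R (gammaZ R Z M) := by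
  classical
  haveI : IsNoetherian R M := isNoetherian_of_isNoetherianRing_of_finite R M
  set N := gammaZ R Z M with hN
  haveI : IsNoetherian R N := inferInstance
  haveI : Module.Finite R N := inferInstance
  -- the support of N is contained in Supp M ∩ Z
  have hsupp : Module.support R N ⊆ Module.support R M ∩ Z := by
    intro p hp
    obtain ⟨x, hx⟩ := Module.mem_support_iff_exists_annihilator.mp hp
    have hxann : (Submodule.span R ({(x : M)} : Set M)).annihilator ≤ p.asIdeal := by
      refine le_trans ?_ hx
      intro r hr
      rw [Submodule.mem_annihilator_span_singleton] at hr ⊢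
      exact Subtype.ext (by simpa using hr)
    constructor
    · exact Module.mem_support_iff_exists_annihilator.mpr ⟨(x : M), hxann⟩
    · exact x.2 ((mem_support_span_singleton_iff R (x : M) p).mpr hxann)
  have hfinN : (Module.support R N).Finite := hfin.subset hsupp
  -- the list of maximal ideals in the support of N
  let l : List (Ideal R) := hfinN.toFinset.toList.map (fun p => p.asIdeal)
  have hlmax : ∀ m ∈ l, m.IsMaximal := by
    intro m hm
    obtain ⟨p, hp, rfl⟩ := List.mem_map.mp hm
    rw [Finset.mem_toList, Set.Finite.mem_toFinset] at hp
    exact hmax p (hsupp hp)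
  -- the product of l lies in the radical of the annihilator of N
  have hrad : l.prod ≤ (Module.annihilator R N).radical := by
    rw [Ideal.radical_eq_sInf]
    refine le_sInf ?_
    rintro J ⟨hJle, hJprime⟩
    have hpJ : (⟨J, hJprime⟩ : PrimeSpectrum R) ∈ Module.support R N :=
      Module.mem_support_iff_of_finite.mpr hJle
    refine list_prod_le_of_mem l J ?_
    exact List.mem_map.mpr ⟨⟨J, hJprime⟩, by
      rw [Finset.mem_toList, Set.Finite.mem_toFinset]; exact hpJ, rfl⟩
  obtain ⟨n, hn⟩ := Ideal.exists_pow_le_of_le_radical_of_fg hrad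
    (IsNoetherian.noetherian _)
  -- the list l repeated n times
  refine isArtinian_of_prod_maximal_le_ann R ((List.replicate n l).flatten) ?_ N ?_
  · intro m hm
    obtain ⟨l', hl', hm'⟩ := List.mem_flatten.mp hm
    rw [List.eq_of_mem_replicate hl'] at hm'
    exact hlmax m hm'
  · rw [List.prod_flatten, List.map_replicate, List.prod_replicate]
    exact hn
end

section
/- Let (R, m, k) be a Noetherian local ring and A an Artinian R-module. Then Att_R(A) = Ass_R(Hom_R(A, E(R/m))), where E(R/m) is the injective envelope of the residue field. -/
open CategoryTheory CategoryTheory.Limits DirectSum TensorProduct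

universe u

/-- `p` is an attached prime of the `R`-module `M`. -/
def IsAttachedPrime (R : Type u) [CommRing R] (M : Type u) [AddCommGroup M] [Module R M]
    (p : Ideal R) : Prop :=
  p.IsPrime ∧ ∃ N : Submodule R M, Module.annihilator R (M ⧸ N) = p

/-- The set of attached primes of `M`. -/
def attachedPrimes (R : Type u) [CommRing R] (M : Type u) [AddCommGroup M] [Module R M] :
    Set (Ideal R) :=
  {p | IsAttachedPrime R M p}

/-- `E` is a cogenerator: every nonzero element of a module admits a linear map to `E`
not vanishing on it. -/
lemma exists_map_ne_zero (R : Type u) [CommRing R] [IsLocalRing R]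
    (E : Type u) [AddCommGroup E] [Module R E]
    (ι : (R ⧸ IsLocalRing.maximalIdeal R) →ₗ[R] E)
    (hE : IsInjectiveEnvelope R (R ⧸ IsLocalRing.maximalIdeal R) E ι)
    (M : Type u) [AddCommGroup M] [Module R M] (x : M) (hx : x ≠ 0) :
    ∃ f : M →ₗ[R] E, f x ≠ 0 := by
  set q := LinearMap.toSpanSingleton R M x with hq
  have hker : LinearMap.ker q ≤
      Submodule.comap (LinearMap.id : R →ₗ[R] R) (IsLocalRing.maximalIdeal R) := by
    have : LinearMap.ker q ≤ IsLocalRing.maximalIdeal R := by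
      apply IsLocalRing.le_maximalIdeal
      intro h
      have h1 : (1 : R) ∈ LinearMap.ker q := h ▸ Submodule.mem_top
      rw [LinearMap.mem_ker, hq, LinearMap.toSpanSingleton_apply, one_smul] at h1
      exact hx h1
    simpa using this
  let g₁ : (R ⧸ LinearMap.ker q) →ₗ[R] (R ⧸ IsLocalRing.maximalIdeal R) :=
    Submodule.mapQ _ _ LinearMap.id hker
  let e := q.quotKerEquivRange
  let g₂ : LinearMap.range q →ₗ[R] E := ι ∘ₗ g₁ ∘ₗ (e.symm : _ →ₗ[R] _)
  obtain ⟨h, hh⟩ := hE.injective.out (LinearMap.range q).subtype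
    (Submodule.injective_subtype _) g₂
  have hxmem : x ∈ LinearMap.range q := ⟨1, by simp [hq]⟩
  refine ⟨h, ?_⟩
  have hxval : h x = g₂ ⟨x, hxmem⟩ := hh ⟨x, hxmem⟩
  rw [hxval]
  have he : e.symm ⟨x, hxmem⟩ = Submodule.Quotient.mk 1 := by
    apply e.injective
    rw [LinearEquiv.apply_symm_apply]
    ext
    rw [LinearMap.quotKerEquivRange_apply_mk]
    simp [hq]
  simp only [g₂, LinearMap.comp_apply, LinearEquiv.coe_coe, he]
  have hg₁ : g₁ (Submodule.Quotient.mk 1) = Submodule.Quotient.mk 1 := by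
    rw [show g₁ = (LinearMap.ker q).mapQ (IsLocalRing.maximalIdeal R) LinearMap.id hker from rfl,
      Submodule.mapQ_apply]
    rfl
  rw [hg₁]
  intro h0
  have h1 : (Submodule.Quotient.mk (1 : R) : R ⧸ IsLocalRing.maximalIdeal R) = 0 :=
    hE.mono (by simpa using h0)
  rw [Submodule.Quotient.mk_eq_zero] at h1
  exact (IsLocalRing.maximalIdeal.isMaximal R).ne_top ((Ideal.eq_top_iff_one _).2 h1)

/-- over a Noetherian local ring, `Att_R A = Ass_R (Hom_R (A, E(R/m)))` for
`A` Artinian, where `E(R/m)` is the injective envelope of the residue field. -/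
theorem attachedPrimes_eq_associatedPrimes_dual (R : Type u) [CommRing R]
    [IsNoetherianRing R] [IsLocalRing R]
    (A : Type u) [AddCommGroup A] [Module R A] [IsArtinian R A]
    (E : Type u) [AddCommGroup E] [Module R E]
    (ι : (R ⧸ IsLocalRing.maximalIdeal R) →ₗ[R] E)
    (hE : IsInjectiveEnvelope R (R ⧸ IsLocalRing.maximalIdeal R) E ι) :
    attachedPrimes R A = associatedPrimes R (A →ₗ[R] E) := by
  ext p
  constructor
  · rintro ⟨hp, N, hN⟩
    -- The quotient `M = A ⧸ N` has annihilator exactly `p`.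
    have hpann : ∀ r : R, r ∈ p ↔ ∀ m : A ⧸ N, r • m = 0 := fun r => by
      rw [← hN, Module.mem_annihilator]
    -- Minimal member of the family `{r • M : r ∉ p}` (Artinian).
    let S : Set (Submodule R (A ⧸ N)) :=
      {N' | ∃ r, r ∉ p ∧ N' = LinearMap.range (r • (LinearMap.id : (A ⧸ N) →ₗ[R] A ⧸ N))}
    have h1S : (1 : R) ∉ p := fun h => hp.ne_top ((Ideal.eq_top_iff_one _).2 h)
    obtain ⟨N₀, hN₀S, hmin⟩ := IsArtinian.set_has_minimal S ⟨_, 1, h1S, rfl⟩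
    obtain ⟨r₀, hr₀, rfl⟩ := hN₀S
    -- Minimality: for every `s ∉ p`, `(s * r₀) • M = r₀ • M`.
    have key : ∀ s : R, s ∉ p →
        LinearMap.range ((s * r₀) • (LinearMap.id : (A ⧸ N) →ₗ[R] A ⧸ N)) =
        LinearMap.range (r₀ • (LinearMap.id : (A ⧸ N) →ₗ[R] A ⧸ N)) := by
      intro s hs
      have hsr₀ : s * r₀ ∉ p := fun h => (hp.mem_or_mem h).elim hs hr₀
      have hle : LinearMap.range ((s * r₀) • (LinearMap.id : (A ⧸ N) →ₗ[R] A ⧸ N)) ≤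
          LinearMap.range (r₀ • (LinearMap.id : (A ⧸ N) →ₗ[R] A ⧸ N)) := by
        rintro _ ⟨m, rfl⟩
        exact ⟨s • m, by simp [mul_smul, smul_comm s r₀]⟩
      rcases eq_or_lt_of_le hle with h | h
      · exact h
      · exact absurd h (hmin _ ⟨s * r₀, hsr₀, rfl⟩)
    -- A nonzero element of `r₀ • M`.
    have : ¬ ∀ m : A ⧸ N, r₀ • m = 0 := fun h => hr₀ ((hpann r₀).2 h)
    push_neg at this
    obtain ⟨m₀, hm₀⟩ := this
    obtain ⟨f, hf⟩ := exists_map_ne_zero R E ι hE (A ⧸ N) (r₀ • m₀) hm₀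
    refine (isAssociatedPrime_iff (I := p) (M := A →ₗ[R] E)).2 ⟨hp, f ∘ₗ N.mkQ, ?_⟩
    ext r
    rw [Submodule.mem_colon_singleton, Submodule.mem_bot]
    constructor
    · intro hr
      ext a
      have h0 : r • (N.mkQ a) = 0 := (hpann r).1 hr _
      simp only [LinearMap.smul_apply, LinearMap.comp_apply, LinearMap.zero_apply,
        ← map_smul, h0, map_zero]
    · intro hr
      by_contra hrp
      -- `r₀ • m₀ ∈ (r * r₀) • M`, so `r • (f ∘ mkQ)` is nonzero somewhere.
      have hmem : r₀ • m₀ ∈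
          LinearMap.range ((r * r₀) • (LinearMap.id : (A ⧸ N) →ₗ[R] A ⧸ N)) := by
        rw [key r hrp]; exact ⟨m₀, by simp⟩
      obtain ⟨m₁, hm₁⟩ := hmem
      obtain ⟨b, hb⟩ := N.mkQ_surjective (r₀ • m₁)
      have : (r • (f ∘ₗ N.mkQ)) b = f (r₀ • m₀) := by
        simp only [LinearMap.smul_apply, LinearMap.comp_apply, hb, ← map_smul]
        congr 1
        rw [← hm₁]
        simp [mul_smul, smul_comm r r₀]
      rw [hr] at this
      exact hf (by simpa using this.symm)
  · intro hpA
    obtain ⟨hp, f, hf⟩ := (isAssociatedPrime_iff (I := p) (M := A →ₗ[R] E)).1 hpA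
    refine ⟨hp, LinearMap.ker f, ?_⟩
    rw [hf]
    ext r
    rw [Submodule.mem_colon_singleton, Submodule.mem_bot, Module.mem_annihilator]
    constructor
    · intro hr
      ext a
      have h2 : r • a ∈ LinearMap.ker f := by
        rw [← Submodule.Quotient.mk_eq_zero (LinearMap.ker f)]
        simpa using hr (Submodule.Quotient.mk a)
      simp only [LinearMap.smul_apply, LinearMap.zero_apply, ← map_smul]
      exact LinearMap.mem_ker.1 h2
    · intro hr m
      obtain ⟨a, rfl⟩ := (LinearMap.ker f).mkQ_surjective m
      rw [← map_smul, Submodule.mkQ_apply, Submodule.Quotient.mk_eq_zero, LinearMap.mem_ker]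
      have := LinearMap.congr_fun hr a
      simpa [map_smul] using this
end
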